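/- There exists a constant C > 0 such that for all ξ, η ∈ ℝ³, |ξ|·|ξ−η|·|η| ≤ C·|Φ₁(ξ,η)|·(1 + |ξ−η|²)·(1 + |η|²). (Equivalently, the multiplier |ξ||ξ−η||η| / (Φ₁(ξ,η)·⟨ξ−η⟩²·⟨η⟩²) is bounded uniformly on ℝ³ × ℝ³.) -/

import Mathlib

noncomputable def q (r : ℝ) : ℝ := Real.sqrt ((2 + r ^ 2) / (1 + r ^ 2))
noncomputable def p (r : ℝ) : ℝ := r * q r
noncomputable def Φ₁ (ξ η : EuclideanSpace ℝ (Fin 3)) : ℝ :=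
  p ‖ξ‖ - p ‖ξ - η‖ - p ‖η‖

lemma q_sq (r : ℝ) : (q r) ^ 2 = 1 + 1 / (1 + r ^ 2) := by
  have h : (0:ℝ) < 1 + r ^ 2 := by positivity
  unfold q
  rw [Real.sq_sqrt (by positivity)]
  field_simp
  ring

lemma one_le_q (r : ℝ) : 1 ≤ q r := by
  have h : (0:ℝ) < 1 + r ^ 2 := by positivity
  have hq0 : 0 ≤ q r := Real.sqrt_nonneg _
  have h1 : (1:ℝ) ≤ (q r) ^ 2 := by
    rw [q_sq]
    have : 0 < 1 / (1 + r ^ 2) := by positivity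
    linarith
  nlinarith

lemma q_nonneg (r : ℝ) : 0 ≤ q r := le_trans zero_le_one (one_le_q r)

lemma q_le (r : ℝ) : q r ≤ 3 / 2 := by
  have h : (0:ℝ) < 1 + r ^ 2 := by positivity
  have h1 : (q r) ^ 2 ≤ 2 := by
    rw [q_sq]
    have : 1 / (1 + r ^ 2) ≤ 1 := by
      rw [div_le_one h]; nlinarith
    linarith
  nlinarith [q_nonneg r]

lemma p_zero : p 0 = 0 := by simp [p]

lemma p_nonneg {r : ℝ} (hr : 0 ≤ r) : 0 ≤ p r := mul_nonneg hr (q_nonneg r)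

lemma p_sq (r : ℝ) : (p r) ^ 2 = r ^ 2 * (1 + 1 / (1 + r ^ 2)) := by
  unfold p
  rw [mul_pow, q_sq]

lemma p_mono {a s : ℝ} (ha : 0 ≤ a) (has : a ≤ s) : p a ≤ p s := by
  have hs : 0 ≤ s := le_trans ha has
  have hA : (0:ℝ) < 1 + a ^ 2 := by positivity
  have hS : (0:ℝ) < 1 + s ^ 2 := by positivity
  have h2 : (p a) ^ 2 ≤ (p s) ^ 2 := by
    rw [p_sq, p_sq]
    have ha2 : a ^ 2 ≤ s ^ 2 := by nlinarith
    have hfrac : a ^ 2 * (1 / (1 + a ^ 2)) ≤ s ^ 2 * (1 / (1 + s ^ 2)) := by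
      rw [mul_one_div, mul_one_div, div_le_div_iff₀ hA hS]
      nlinarith
    nlinarith
  nlinarith [p_nonneg ha, p_nonneg hs]

lemma q_le_sqrt2 (r : ℝ) : q r ≤ Real.sqrt 2 := by
  have h : (0:ℝ) < 1 + r ^ 2 := by positivity
  unfold q
  apply Real.sqrt_le_sqrt
  rw [div_le_iff₀ h]
  nlinarith
lemma p_le {r : ℝ} (hr : 0 ≤ r) : p r ≤ (3 / 2) * r := by
  unfold p; nlinarith [q_le r, q_nonneg r]

lemma p_pos {r : ℝ} (hr : 0 < r) : 0 < p r := by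
  have h1 : 1 ≤ q r := one_le_q r
  have : r * 1 ≤ r * q r := mul_le_mul_of_nonneg_left h1 (le_of_lt hr)
  unfold p; nlinarith

set_option maxHeartbeats 1000000 in

lemma key (b c : ℝ) (hb : 0 ≤ b) (hc : 0 ≤ c) :
    b * c * (b + c) ≤ 9 * (p b + p c - p (b + c)) * ((1 + b ^ 2) * (1 + c ^ 2)) := by
  rcases eq_or_lt_of_le (by positivity : (0:ℝ) ≤ b + c) with hs0 | hs0
  · have hb0 : b = 0 := by nlinarith
    have hc0 : c = 0 := by nlinarith
    rw [hb0, hc0]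
    norm_num [p_zero]
  have hB : (0:ℝ) < 1 + b ^ 2 := by positivity
  have hC : (0:ℝ) < 1 + c ^ 2 := by positivity
  have hS : (0:ℝ) < 1 + (b + c) ^ 2 := by positivity
  -- lower bound for q b * q c - 1, cleared of denominators
  have hQsq : (q b * q c) ^ 2 * ((1 + b ^ 2) * (1 + c ^ 2))
      = ((1 + b ^ 2) + 1) * ((1 + c ^ 2) + 1) := by
    have h1 : (q b * q c) ^ 2 = (1 + 1 / (1 + b ^ 2)) * (1 + 1 / (1 + c ^ 2)) := by
      rw [mul_pow, q_sq b, q_sq c]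
    rw [h1]
    field_simp
    try ring
  have hQ1 : 1 ≤ q b * q c := by nlinarith [one_le_q b, one_le_q c]
  have hQ2 : q b * q c ≤ 2 := by
    have h1 : q b * q c ≤ Real.sqrt 2 * Real.sqrt 2 :=
      mul_le_mul (q_le_sqrt2 b) (q_le_sqrt2 c) (q_nonneg c) (Real.sqrt_nonneg 2)
    rwa [Real.mul_self_sqrt (by norm_num)] at h1
  have hQlb : ((1 + b ^ 2) + (1 + c ^ 2) + 1)
      ≤ (q b * q c - 1) * (3 * ((1 + b ^ 2) * (1 + c ^ 2))) := by
    nlinarith [hQsq, mul_pos hB hC]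
  -- N identity (denominators cleared)
  have hNeq : ((p b + p c) ^ 2 - (p (b + c)) ^ 2)
        * ((1 + b ^ 2) * (1 + c ^ 2) * (1 + (b + c) ^ 2))
      = 2 * b * c * (q b * q c - 1)
          * ((1 + b ^ 2) * (1 + c ^ 2) * (1 + (b + c) ^ 2))
        + b ^ 2 * ((1 + c ^ 2) * (1 + (b + c) ^ 2))
        + c ^ 2 * ((1 + b ^ 2) * (1 + (b + c) ^ 2))
        - (b + c) ^ 2 * ((1 + b ^ 2) * (1 + c ^ 2)) := by
    have hexp : (p b + p c) ^ 2 - (p (b + c)) ^ 2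
        = 2 * b * c * (q b * q c - 1)
          + b ^ 2 * (1 / (1 + b ^ 2)) + c ^ 2 * (1 / (1 + c ^ 2))
          - (b + c) ^ 2 * (1 / (1 + (b + c) ^ 2)) := by
      simp only [p]
      linear_combination b ^ 2 * q_sq b + c ^ 2 * q_sq c - (b + c) ^ 2 * q_sq (b + c)
    rw [hexp]
    field_simp
    try ring
  -- multiply hQlb by the nonnegative quantity 2*b*c*(1+(b+c)^2)
  have hprod : 2 * b * c * (((1 + b ^ 2) + (1 + c ^ 2) + 1) * (1 + (b + c) ^ 2))
      ≤ 2 * b * c * ((q b * q c - 1) * (3 * ((1 + b ^ 2) * (1 + c ^ 2))) * (1 + (b + c) ^ 2)) := by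
    have h1 : (0:ℝ) ≤ 2 * b * c * (1 + (b + c) ^ 2) := by positivity
    have h2 := mul_le_mul_of_nonneg_left hQlb h1
    linarith [h2]
  -- purely polynomial inequality with all nonnegative coefficients
  have hpoly : b * c * (b + c) ^ 2 * (1 + (b + c) ^ 2)
      ≤ 2 * b * c * (((1 + b ^ 2) + (1 + c ^ 2) + 1) * (1 + (b + c) ^ 2))
        + 3 * (b ^ 2 * ((1 + c ^ 2) * (1 + (b + c) ^ 2))
          + c ^ 2 * ((1 + b ^ 2) * (1 + (b + c) ^ 2))
          - (b + c) ^ 2 * ((1 + b ^ 2) * (1 + c ^ 2))) := by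
    have m1 : (0:ℝ) ≤ b * c ^ 3 := by positivity
    have m2 : (0:ℝ) ≤ b * c ^ 5 := by positivity
    have m3 : (0:ℝ) ≤ b ^ 2 * c ^ 2 := by positivity
    have m4 : (0:ℝ) ≤ b ^ 2 * c ^ 4 := by positivity
    have m5 : (0:ℝ) ≤ b ^ 3 * c := by positivity
    have m6 : (0:ℝ) ≤ b ^ 3 * c ^ 3 := by positivity
    have m7 : (0:ℝ) ≤ b ^ 4 * c ^ 2 := by positivity
    have m8 : (0:ℝ) ≤ b ^ 5 * c := by positivity
    linarith [m1, m2, m3, m4, m5, m6, m7, m8]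
  have hNS : b * c * (b + c) ^ 2 * (1 + (b + c) ^ 2)
      ≤ 3 * (((p b + p c) ^ 2 - (p (b + c)) ^ 2)
          * ((1 + b ^ 2) * (1 + c ^ 2) * (1 + (b + c) ^ 2))) := by
    linarith [hNeq, hprod, hpoly]
  have hNBC : b * c * (b + c) ^ 2
      ≤ 3 * (((p b + p c) ^ 2 - (p (b + c)) ^ 2) * ((1 + b ^ 2) * (1 + c ^ 2))) := by
    have h := (mul_le_mul_iff_of_pos_right hS).mp (by linarith [hNS] :
      b * c * (b + c) ^ 2 * (1 + (b + c) ^ 2)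
        ≤ 3 * (((p b + p c) ^ 2 - (p (b + c)) ^ 2) * ((1 + b ^ 2) * (1 + c ^ 2)))
          * (1 + (b + c) ^ 2))
    linarith
  -- bounds on D = p b + p c + p (b+c)
  have hpb := p_nonneg hb
  have hpc := p_nonneg hc
  have hps_pos : 0 < p (b + c) := p_pos hs0
  have hD_le : p b + p c + p (b + c) ≤ 3 * (b + c) := by
    have h1 := p_le hb
    have h2 := p_le hc
    have h3 := p_le (le_of_lt hs0)
    linarith
  have hN_nonneg : (0:ℝ) ≤ (p b + p c) ^ 2 - (p (b + c)) ^ 2 := by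
    have hbcs : (0:ℝ) ≤ b * c * (b + c) ^ 2 := by positivity
    nlinarith [hNBC, mul_pos hB hC]
  have hD_pos : 0 < p b + p c + p (b + c) := by linarith
  have hh : 0 ≤ p b + p c - p (b + c) := by
    nlinarith [hN_nonneg, hD_pos]
  -- final chain
  have hBC : (0:ℝ) < (1 + b ^ 2) * (1 + c ^ 2) := mul_pos hB hC
  have hchain : ((p b + p c) ^ 2 - (p (b + c)) ^ 2) * ((1 + b ^ 2) * (1 + c ^ 2))
      ≤ (p b + p c - p (b + c)) * ((1 + b ^ 2) * (1 + c ^ 2)) * (3 * (b + c)) := by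
    have hnn : 0 ≤ (p b + p c - p (b + c)) * ((1 + b ^ 2) * (1 + c ^ 2)) :=
      mul_nonneg hh (le_of_lt hBC)
    linarith [mul_le_mul_of_nonneg_left hD_le hnn]
  have hfinal : b * c * (b + c) * (b + c)
      ≤ 9 * (p b + p c - p (b + c)) * ((1 + b ^ 2) * (1 + c ^ 2)) * (b + c) := by
    linarith [hNBC, hchain]
  have h := le_of_mul_le_mul_right (by linarith [hfinal] :
    b * c * (b + c) * (b + c)
      ≤ 9 * (p b + p c - p (b + c)) * ((1 + b ^ 2) * (1 + c ^ 2)) * (b + c)) hs0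
  linarith

theorem stmt7 :
    ∃ C : ℝ, 0 < C ∧
      ∀ ξ η : EuclideanSpace ℝ (Fin 3),
        ‖ξ‖ * ‖ξ - η‖ * ‖η‖ ≤ C * |Φ₁ ξ η| * (1 + ‖ξ - η‖ ^ 2) * (1 + ‖η‖ ^ 2) := by
  refine ⟨9, by norm_num, fun ξ η => ?_⟩
  set a := ‖ξ‖ with ha_def
  set b := ‖ξ - η‖ with hb_def
  set c := ‖η‖ with hc_def
  have ha : 0 ≤ a := norm_nonneg _
  have hb : 0 ≤ b := norm_nonneg _
  have hc : 0 ≤ c := norm_nonneg _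
  have htri : a ≤ b + c := by
    rw [ha_def, hb_def, hc_def]
    calc ‖ξ‖ = ‖(ξ - η) + η‖ := by rw [sub_add_cancel]
      _ ≤ ‖ξ - η‖ + ‖η‖ := norm_add_le _ _
  have hkey := key b c hb hc
  have hpa : p a ≤ p (b + c) := p_mono ha htri
  have hΦ : p b + p c - p a ≤ |Φ₁ ξ η| := by
    have hdef : Φ₁ ξ η = p a - p b - p c := rfl
    rw [hdef]
    linarith [neg_abs_le (p a - p b - p c)]
  have hbcs : (0:ℝ) ≤ b * c * (b + c) := by positivity
  have hBC : (0:ℝ) < (1 + b ^ 2) * (1 + c ^ 2) := by positivity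
  have hh0 : 0 ≤ p b + p c - p (b + c) := by nlinarith [hkey, hbcs, hBC]
  have hΦ' : p b + p c - p (b + c) ≤ |Φ₁ ξ η| := by linarith
  have h2 : 9 * (p b + p c - p (b + c)) * ((1 + b ^ 2) * (1 + c ^ 2))
      ≤ 9 * |Φ₁ ξ η| * ((1 + b ^ 2) * (1 + c ^ 2)) := by
    have h9 : (0:ℝ) ≤ 9 * ((1 + b ^ 2) * (1 + c ^ 2)) := by positivity
    nlinarith [mul_le_mul_of_nonneg_left hΦ' h9]
  have h1 : a * b * c ≤ b * c * (b + c) := by nlinarith [mul_nonneg hb hc]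
  calc a * b * c ≤ b * c * (b + c) := h1
    _ ≤ 9 * (p b + p c - p (b + c)) * ((1 + b ^ 2) * (1 + c ^ 2)) := hkey
    _ ≤ 9 * |Φ₁ ξ η| * ((1 + b ^ 2) * (1 + c ^ 2)) := h2
    _ = 9 * |Φ₁ ξ η| * (1 + b ^ 2) * (1 + c ^ 2) := by ring
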